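/- Let z : Fin K → ℝ (K ≥ 2) be logits with a unique maximizer. Then the confidence S(z, T) = q^{(ŷ)}(z, T) is strictly decreasing in T on (0, ∞), and S(z, T) > 1/K for every T > 0. -/

import Mathlib

theorem confidence_strictAnti_and_gt_inv_K (K : ℕ) (hK : 2 ≤ K) (z : Fin K → ℝ)
    (yhat : Fin K) (hmax : ∀ j : Fin K, j ≠ yhat → z j < z yhat) :
    StrictAntiOn (fun T : ℝ => Real.exp (z yhat / T) / ∑ j : Fin K, Real.exp (z j / T))
      (Set.Ioi (0 : ℝ)) ∧
    ∀ T : ℝ, 0 < T →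
      (1 : ℝ) / K < Real.exp (z yhat / T) / ∑ j : Fin K, Real.exp (z j / T) := by
  obtain ⟨j0, hj0⟩ : ∃ j : Fin K, j ≠ yhat := by
    have : 1 < Fintype.card (Fin K) := by rw [Fintype.card_fin]; omega
    exact Fintype.exists_ne_of_one_lt_card this yhat
  set D : ℝ → ℝ := fun T => ∑ j : Fin K, Real.exp ((z j - z yhat) / T) with hD
  have hDpos : ∀ T : ℝ, 0 < D T := fun T =>
    Finset.sum_pos (fun j _ => Real.exp_pos _) ⟨yhat, Finset.mem_univ _⟩
  have key : ∀ T : ℝ, Real.exp (z yhat / T) * D T = ∑ j : Fin K, Real.exp (z j / T) := by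
    intro T
    rw [hD, Finset.mul_sum]
    refine Finset.sum_congr rfl fun j _ => ?_
    rw [← Real.exp_add]
    congr 1
    ring
  have hS : ∀ T : ℝ,
      Real.exp (z yhat / T) / (∑ j : Fin K, Real.exp (z j / T)) = 1 / D T := by
    intro T
    rw [← key T, div_mul_cancel_left₀ (Real.exp_pos _).ne', one_div]
  have hDmono : ∀ T1 ∈ Set.Ioi (0:ℝ), ∀ T2 ∈ Set.Ioi (0:ℝ), T1 < T2 → D T1 < D T2 := by
    intro T1 hT1 T2 hT2 h
    simp only [Set.mem_Ioi] at hT1 hT2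
    refine Finset.sum_lt_sum (fun j _ => ?_) ⟨j0, Finset.mem_univ _, ?_⟩
    · rcases eq_or_ne j yhat with rfl | hj
      · simp
      · have ha : z j - z yhat < 0 := sub_neg.mpr (hmax j hj)
        have : (z j - z yhat) / T1 ≤ (z j - z yhat) / T2 := by
          rw [div_le_div_iff₀ hT1 hT2]; nlinarith
        exact Real.exp_le_exp.mpr this
    · have ha : z j0 - z yhat < 0 := sub_neg.mpr (hmax j0 hj0)
      have : (z j0 - z yhat) / T1 < (z j0 - z yhat) / T2 := by
        rw [div_lt_div_iff₀ hT1 hT2]; nlinarith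
      exact Real.exp_lt_exp.mpr this
  constructor
  · intro T1 hT1 T2 hT2 h
    simp only
    rw [hS T1, hS T2]
    exact one_div_lt_one_div_of_lt (hDpos T1) (hDmono T1 hT1 T2 hT2 h)
  · intro T hT
    rw [hS T]
    have hDK : D T < K := by
      have : D T < ∑ _j : Fin K, (1:ℝ) := by
        refine Finset.sum_lt_sum (fun j _ => ?_) ⟨j0, Finset.mem_univ _, ?_⟩
        · rcases eq_or_ne j yhat with rfl | hj
          · simp
          · have ha : z j - z yhat < 0 := sub_neg.mpr (hmax j hj)
            have : (z j - z yhat) / T ≤ 0 := le_of_lt (div_neg_of_neg_of_pos ha hT)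
            calc Real.exp _ ≤ Real.exp 0 := Real.exp_le_exp.mpr this
              _ = 1 := Real.exp_zero
        · have ha : z j0 - z yhat < 0 := sub_neg.mpr (hmax j0 hj0)
          have h2 : (z j0 - z yhat) / T < 0 := div_neg_of_neg_of_pos ha hT
          calc Real.exp _ < Real.exp 0 := Real.exp_lt_exp.mpr h2
            _ = 1 := Real.exp_zero
      simpa using this
    exact one_div_lt_one_div_of_lt (hDpos T) hDK
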